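/- arXiv:2304.09672 — 5 statements merged into one kernel-verified Lean document; each statement's English description precedes it below -/
import Mathlib

section
/- Let s ≥ 1 be an integer and c_1 < … < c_s be s distinct real numbers that are symmetric with respect to 1/2, i.e. c_i + c_{s+1−i} = 1 for all i ∈ {1, …, s}. Let π = ∏_{i=1}^s (X − c_i). Then τ(π(X+1))(λ) = (−1)^s · τ(π(X))(−λ) for all λ ∈ ℂ, where π(X+1) denotes π composed with X+1 and τ is the linear map on polynomials of degree at most s sending Σ_k a_k X^k to Σ_k k! a_k X^k. -/
open Polynomial Matrix MeasureTheory

noncomputable section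

/-- Lagrange basis function `ℓ_i(t) = ∏_{j≠i} (t - c_j)/(c_i - c_j)`. -/
def lagrangeFun (s : ℕ) (c : Fin s → ℝ) (i : Fin s) (t : ℝ) : ℝ :=
  ∏ j ∈ Finset.univ.erase i, (t - c j) / (c i - c j)

/-- Coefficient matrix `A` of the collocation method: `a_{ij} = ∫_0^{c_i} ℓ_j`. -/
def collocA (s : ℕ) (c : Fin s → ℝ) : Matrix (Fin s) (Fin s) ℝ :=
  Matrix.of fun i j => ∫ t in (0:ℝ)..(c i), lagrangeFun s c j t

/-- Weight vector `b` of the collocation method: `b_i = ∫_0^1 ℓ_i`. -/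
def collocB (s : ℕ) (c : Fin s → ℝ) : Fin s → ℝ :=
  fun i => ∫ t in (0:ℝ)..(1:ℝ), lagrangeFun s c i t

/-- `π = ∏ (X - c_i)`. -/
def piPoly (s : ℕ) (c : Fin s → ℝ) : Polynomial ℝ :=
  ∏ i : Fin s, (Polynomial.X - Polynomial.C (c i))

/-- The linear map `τ` sending `Σ a_k X^k` to `Σ k! a_k X^k`. -/
def tauP (p : Polynomial ℝ) : Polynomial ℝ :=
  ∑ k ∈ p.support, Polynomial.C ((k.factorial : ℝ) * p.coeff k) * Polynomial.X ^ k

/-- The matrix `A` viewed as a complex matrix. -/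
def collocAC (s : ℕ) (c : Fin s → ℝ) : Matrix (Fin s) (Fin s) ℂ :=
  (collocA s c).map (fun x => (x : ℂ))

/-- The weight vector `b` viewed as a complex vector. -/
def collocBC (s : ℕ) (c : Fin s → ℝ) : Fin s → ℂ :=
  fun i => (collocB s c i : ℂ)

/-- The linear stability function `R(λ) = 1 + λ bᵀ (I - λ A)⁻¹ 𝟙`. -/
def stabR (s : ℕ) (c : Fin s → ℝ) (lam : ℂ) : ℂ :=
  1 + lam * (collocBC s c ⬝ᵥ ((1 - lam • collocAC s c)⁻¹ *ᵥ (fun _ => 1)))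

/-- A-stability: `|R(λ)| ≤ 1` on the closed left half-plane (where defined). -/
def AStable (s : ℕ) (c : Fin s → ℝ) : Prop :=
  ∀ lam : ℂ, lam.re ≤ 0 → IsUnit (1 - lam • collocAC s c).det →
    ‖stabR s c lam‖ ≤ 1

/-- I-stability: `|R(λ)| ≤ 1` on the imaginary axis (where defined). -/
def IStable (s : ℕ) (c : Fin s → ℝ) : Prop :=
  ∀ lam : ℂ, lam.re = 0 → IsUnit (1 - lam • collocAC s c).det →
    ‖stabR s c lam‖ ≤ 1

/-- AS-stability: `I - λA` invertible on `ℂ⁻` and `λ bᵀ (I - λA)⁻¹` uniformly bounded there. -/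
def ASStable (s : ℕ) (c : Fin s → ℝ) : Prop :=
  (∀ lam : ℂ, lam.re ≤ 0 → IsUnit (1 - lam • collocAC s c).det) ∧
  ∃ M : ℝ, ∀ lam : ℂ, lam.re ≤ 0 → ∀ j,
    ‖lam * (collocBC s c ᵥ* (1 - lam • collocAC s c)⁻¹) j‖ ≤ M

/-- ASI-stability: `I - λA` invertible on `ℂ⁻` and `(I - λA)⁻¹` uniformly bounded there. -/
def ASIStable (s : ℕ) (c : Fin s → ℝ) : Prop :=
  (∀ lam : ℂ, lam.re ≤ 0 → IsUnit (1 - lam • collocAC s c).det) ∧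
  ∃ M : ℝ, ∀ lam : ℂ, lam.re ≤ 0 → ∀ i j,
    ‖(1 - lam • collocAC s c)⁻¹ i j‖ ≤ M

/-- IS-stability: `I - λA` invertible on `iℝ` and `λ bᵀ (I - λA)⁻¹` uniformly bounded there. -/
def ISStable (s : ℕ) (c : Fin s → ℝ) : Prop :=
  (∀ lam : ℂ, lam.re = 0 → IsUnit (1 - lam • collocAC s c).det) ∧
  ∃ M : ℝ, ∀ lam : ℂ, lam.re = 0 → ∀ j,
    ‖lam * (collocBC s c ᵥ* (1 - lam • collocAC s c)⁻¹) j‖ ≤ M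

/-- ISI-stability: `I - λA` invertible on `iℝ` and `(I - λA)⁻¹` uniformly bounded there. -/
def ISIStable (s : ℕ) (c : Fin s → ℝ) : Prop :=
  (∀ lam : ℂ, lam.re = 0 → IsUnit (1 - lam • collocAC s c).det) ∧
  ∃ M : ℝ, ∀ lam : ℂ, lam.re = 0 → ∀ i j,
    ‖(1 - lam • collocAC s c)⁻¹ i j‖ ≤ M

end


open Polynomial in
lemma tauP_aeval (p : Polynomial ℝ) (n : ℕ) (hn : p.natDegree < n) (lam : ℂ) :
    Polynomial.aeval lam (tauP p) =
      ∑ k ∈ Finset.range n, (((k.factorial : ℝ) * p.coeff k : ℝ) : ℂ) * lam ^ k := by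
  rw [tauP, map_sum,
    Finset.sum_subset (Polynomial.supp_subset_range hn)
      (fun k _ hk => by simp [Polynomial.notMem_support_iff.mp hk])]
  refine Finset.sum_congr rfl fun k _ => ?_
  simp [Polynomial.aeval_C]

open Polynomial in
lemma piPoly_comp_eq (s : ℕ) (c : Fin s → ℝ) (hsym : ∀ i : Fin s, c i + c i.rev = 1) :
    (piPoly s c).comp (Polynomial.X + 1) = ∏ i : Fin s, (X + C (c i)) := by
  rw [piPoly, Polynomial.prod_comp]
  have h1 : ∀ i : Fin s, (X - C (c i)).comp (X + 1) = X + C (c i.rev) := by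
    intro i
    have : c i.rev = 1 - c i := by have := hsym i; linarith
    rw [this]
    simp [sub_comp, X_comp, C_comp]
    ring
  rw [Finset.prod_congr rfl fun i _ => h1 i]
  exact Fintype.prod_equiv Fin.revPerm _ _ (fun i => rfl)

open Polynomial in
lemma coeff_rel (s : ℕ) (c : Fin s → ℝ) (k : ℕ) :
    (∏ i : Fin s, (X + C (c i))).coeff k = (-1 : ℝ) ^ (s + k) * (piPoly s c).coeff k := by
  by_cases hk : k ≤ s
  · have hcard : k ≤ (Finset.univ : Finset (Fin s)).card := by simpa using hk
    have h2 : piPoly s c = ∏ i : Fin s, (X + C (-(c i))) := by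
      simp [piPoly, sub_eq_add_neg, map_neg]
    rw [Finset.prod_X_add_C_coeff _ _ hcard, h2,
      Finset.prod_X_add_C_coeff _ _ hcard, Finset.mul_sum]
    refine Finset.sum_congr rfl fun t ht => ?_
    rw [Finset.mem_powersetCard] at ht
    have hcardt : t.card = s - k := by simpa using ht.2
    have hneg : ∏ i ∈ t, -c i = (-1 : ℝ) ^ t.card * ∏ i ∈ t, c i := by
      rw [← Finset.prod_const, ← Finset.prod_mul_distrib]
      exact Finset.prod_congr rfl (fun i _ => by ring)
    rw [hneg, hcardt, ← mul_assoc, ← pow_add]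
    have he : s + k + (s - k) = 2 * s := by omega
    rw [he, pow_mul]
    norm_num
  · push_neg at hk
    have h1 : (∏ i : Fin s, (X + C (c i))).natDegree < k := by
      refine lt_of_le_of_lt ?_ hk
      refine le_trans (Polynomial.natDegree_prod_le _ _) ?_
      simp [Polynomial.natDegree_X_add_C]
    have h2 : (piPoly s c).natDegree < k := by
      refine lt_of_le_of_lt ?_ hk
      refine le_trans (Polynomial.natDegree_prod_le _ _) ?_
      simp [piPoly, Polynomial.natDegree_X_sub_C]
    rw [Polynomial.coeff_eq_zero_of_natDegree_lt h1,
      Polynomial.coeff_eq_zero_of_natDegree_lt h2, mul_zero]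

/-- for collocation points symmetric with respect to `1/2` one has
`τ(π(X+1))(λ) = (-1)^s τ(π(X))(-λ)`. -/
theorem tau_symmetry (s : ℕ) (hs : 1 ≤ s) (c : Fin s → ℝ) (hc : StrictMono c)
    (hsym : ∀ i : Fin s, c i + c i.rev = 1) :
    ∀ lam : ℂ,
      Polynomial.aeval lam (tauP ((piPoly s c).comp (Polynomial.X + 1))) =
        (-1) ^ s * Polynomial.aeval (-lam) (tauP (piPoly s c)) := by
  intro lam
  have hq : ((piPoly s c).comp (Polynomial.X + 1)).natDegree < s + 1 := by
    rw [piPoly_comp_eq s c hsym]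
    refine Nat.lt_succ_of_le (le_trans (Polynomial.natDegree_prod_le _ _) ?_)
    simp [Polynomial.natDegree_X_add_C]
  have hp : (piPoly s c).natDegree < s + 1 := by
    refine Nat.lt_succ_of_le (le_trans (Polynomial.natDegree_prod_le _ _) ?_)
    simp [piPoly, Polynomial.natDegree_X_sub_C]
  rw [tauP_aeval _ (s + 1) hq lam, tauP_aeval _ (s + 1) hp (-lam), Finset.mul_sum]
  refine Finset.sum_congr rfl fun k _ => ?_
  have h1 : ((piPoly s c).comp (Polynomial.X + 1)).coeff k
      = (-1 : ℝ) ^ (s + k) * (piPoly s c).coeff k := by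
    rw [piPoly_comp_eq s c hsym]; exact coeff_rel s c k
  rw [h1, neg_pow lam k, pow_add]
  push_cast
  ring
end

section
/- Let s ≥ 1 be an integer and c_1 < … < c_s be s distinct real numbers symmetric with respect to 1/2 (c_i + c_{s+1−i} = 1 for all i), and let (A, b) be the coefficients of the associated Runge–Kutta collocation method with linear stability function R. Then: (i) limsup of |R(λ)| as |λ| → +∞ (over λ at which R is defined) is at most 1; and (ii) for every purely imaginary λ at which I − λA is invertible, |R(λ)| = 1. -/
open Polynomial Matrix MeasureTheory

noncomputable section AuxSym

lemma lagrange_cont (s : ℕ) (c : Fin s → ℝ) (i : Fin s) :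
    Continuous (lagrangeFun s c i) := by
  unfold lagrangeFun
  exact continuous_finset_prod _ fun j _ => (continuous_id.sub continuous_const).div_const _

lemma lagrange_reflect (s : ℕ) (c : Fin s → ℝ)
    (hrev : ∀ k : Fin s, c k.rev = 1 - c k) (i : Fin s) (t : ℝ) :
    lagrangeFun s c i.rev (1 - t) = lagrangeFun s c i t := by
  unfold lagrangeFun
  refine Finset.prod_bij' (fun j _ => j.rev) (fun j _ => j.rev) ?_ ?_ ?_ ?_ ?_
  · intro j hj
    simp only [Finset.mem_erase, Finset.mem_univ, and_true] at hj ⊢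
    intro h; exact hj (by rw [← h, Fin.rev_rev])
  · intro j hj
    simp only [Finset.mem_erase, Finset.mem_univ, and_true] at hj ⊢
    intro h; exact hj (Fin.rev_inj.mp h)
  · intro j _; exact Fin.rev_rev j
  · intro j _; exact Fin.rev_rev j
  · intro j hj
    rw [hrev j, hrev i]
    rw [show t - (1 - c j) = -(1 - t - c j) by ring,
      show c i - (1 - c j) = -(1 - c i - c j) by ring, neg_div_neg_eq]

lemma lagrange_reflect' (s : ℕ) (c : Fin s → ℝ)
    (hrev : ∀ k : Fin s, c k.rev = 1 - c k) (i : Fin s) (t : ℝ) :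
    lagrangeFun s c i.rev t = lagrangeFun s c i (1 - t) := by
  have := lagrange_reflect s c hrev i (1 - t)
  simpa using this

lemma collocB_rev (s : ℕ) (c : Fin s → ℝ)
    (hrev : ∀ k : Fin s, c k.rev = 1 - c k) (i : Fin s) :
    collocB s c i.rev = collocB s c i := by
  unfold collocB
  simp only [lagrange_reflect' s c hrev i]
  simpa using intervalIntegral.integral_comp_sub_left (lagrangeFun s c i) 1 (a := 0) (b := 1)

lemma collocA_rev (s : ℕ) (c : Fin s → ℝ)
    (hrev : ∀ k : Fin s, c k.rev = 1 - c k) (i j : Fin s) :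
    collocA s c i.rev j.rev = collocB s c j - collocA s c i j := by
  unfold collocA collocB
  simp only [Matrix.of_apply, lagrange_reflect' s c hrev j, hrev i]
  rw [intervalIntegral.integral_comp_sub_left (lagrangeFun s c j) 1]
  have h1 : (1:ℝ) - (1 - c i) = c i := by ring
  have h2 : (1:ℝ) - 0 = 1 := by ring
  rw [h1, h2]
  have hadd := intervalIntegral.integral_add_adjacent_intervals
    (a := (0:ℝ)) (b := c i) (c := 1) (μ := volume)
    ((lagrange_cont s c j).intervalIntegrable _ _)
    ((lagrange_cont s c j).intervalIntegrable _ _)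
  linarith [hadd]

/-- the characteristic-type polynomial `det (1 - X A)` over ℝ. -/
def qpoly (s : ℕ) (c : Fin s → ℝ) : Polynomial ℝ :=
  ((1 : Matrix (Fin s) (Fin s) ℝ[X]) - (X : ℝ[X]) • (collocA s c).map Polynomial.C).det

lemma qpoly_aeval (s : ℕ) (c : Fin s → ℝ) (lam : ℂ) :
    (aeval lam) (qpoly s c) = (1 - lam • collocAC s c).det := by
  unfold qpoly
  rw [AlgHom.map_det]
  congr 1
  ext i j
  simp only [AlgHom.mapMatrix_apply, Matrix.map_apply, Matrix.sub_apply, Matrix.smul_apply,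
    smul_eq_mul, map_sub, _root_.map_mul, aeval_X, aeval_C, Complex.coe_algebraMap, collocAC,
    Matrix.one_apply, apply_ite (aeval lam), _root_.map_one, map_zero]

lemma det_symm_identity (s : ℕ) (c : Fin s → ℝ)
    (hrev : ∀ k : Fin s, c k.rev = 1 - c k) (lam : ℂ)
    (h : IsUnit (1 - lam • collocAC s c).det) :
    (1 - lam • collocAC s c).det * stabR s c lam = (1 + lam • collocAC s c).det := by
  set N := 1 - lam • collocAC s c with hN
  set u : Fin s → ℂ := fun _ => lam with hu
  set v := collocBC s c with hv
  have key : N + Matrix.replicateCol (Fin 1) u * Matrix.replicateRow (Fin 1) v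
      = (1 + lam • collocAC s c).submatrix Fin.revPerm Fin.revPerm := by
    ext i j
    have hA := collocA_rev s c hrev i j
    simp only [Matrix.add_apply, Matrix.sub_apply, Matrix.smul_apply, Matrix.one_apply,
      Matrix.submatrix_apply, hN, Matrix.mul_apply, Finset.sum_const, Finset.card_univ,
      Fintype.card_fin, one_smul, Matrix.replicateCol_apply, Matrix.replicateRow_apply, collocAC, collocBC,
      Matrix.map_apply, smul_eq_mul, hu, hv]
    simp only [Fin.revPerm_apply, Fin.rev_inj, hA]
    push_cast
    ring
  have hNinv : N * N⁻¹ = 1 := Matrix.mul_nonsing_inv N h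
  have factor : N + Matrix.replicateCol (Fin 1) u * Matrix.replicateRow (Fin 1) v
      = N * (1 + Matrix.replicateCol (Fin 1) (N⁻¹ *ᵥ u) * Matrix.replicateRow (Fin 1) v) := by
    rw [Matrix.mul_add, Matrix.mul_one, Matrix.replicateCol_mulVec, ← Matrix.mul_assoc,
      ← Matrix.mul_assoc, hNinv, Matrix.one_mul]
  have h2 : (1 + lam • collocAC s c).det = N.det * (1 + v ⬝ᵥ (N⁻¹ *ᵥ u)) := by
    rw [← Matrix.det_submatrix_equiv_self Fin.revPerm, ← key, factor, Matrix.det_mul]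
    exact congrArg (N.det * ·) (Matrix.det_one_add_replicateCol_mul_replicateRow (ι := Fin 1) _ _)
  rw [h2]
  congr 1
  rw [stabR]
  congr 1
  have hsm : u = lam • (fun _ => (1:ℂ)) := by
    ext k; simp [hu]
  rw [hsm, Matrix.mulVec_smul, dotProduct_smul, smul_eq_mul]

lemma poly_ratio_bound (Q : Polynomial ℂ) (hQ : Q ≠ 0) {ε : ℝ} (hε : 0 < ε) :
    ∃ M : ℝ, ∀ lam : ℂ, M ≤ ‖lam‖ →
      ‖Q.eval (-lam)‖ ≤ (1 + ε) * ‖Q.eval lam‖ := by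
  set n := Q.natDegree with hn
  set a := Q.leadingCoeff with ha
  have ha0 : ‖a‖ ≠ 0 := by
    simpa [ha] using Polynomial.leadingCoeff_ne_zero.mpr hQ
  have hapos : 0 < ‖a‖ := lt_of_le_of_ne (norm_nonneg _) (Ne.symm ha0)
  set C0 : ℝ := ∑ k ∈ Finset.range n, ‖Q.coeff k‖ with hC0
  have hC0nn : 0 ≤ C0 := Finset.sum_nonneg fun k _ => norm_nonneg _
  refine ⟨max 1 ((2 + ε) * C0 / (ε * ‖a‖)), fun lam hM => ?_⟩
  set t := ‖lam‖ with ht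
  have ht1 : (1:ℝ) ≤ t := le_trans (le_max_left _ _) hM
  have ht0 : (0:ℝ) < t := lt_of_lt_of_le one_pos ht1
  have hb : ∀ μ : ℂ, ‖μ‖ = t →
      ‖Q.eval μ - a * μ ^ n‖ ≤ C0 * t ^ (n - 1) := by
    intro μ hμ
    have he : Q.eval μ - a * μ ^ n = ∑ k ∈ Finset.range n, Q.coeff k * μ ^ k := by
      rw [Polynomial.eval_eq_sum_range, Finset.sum_range_succ, ← hn,
        Polynomial.coeff_natDegree, ← ha]
      ring
    rw [he]
    calc ‖∑ k ∈ Finset.range n, Q.coeff k * μ ^ k‖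
        ≤ ∑ k ∈ Finset.range n, ‖Q.coeff k * μ ^ k‖ :=
          norm_sum_le _ _
      _ ≤ ∑ k ∈ Finset.range n, ‖Q.coeff k‖ * t ^ (n - 1) := by
          refine Finset.sum_le_sum fun k hk => ?_
          rw [norm_mul, norm_pow, hμ]
          refine mul_le_mul_of_nonneg_left ?_ (norm_nonneg _)
          have hkn := Finset.mem_range.mp hk
          exact pow_le_pow_right₀ ht1 (by omega)
      _ = C0 * t ^ (n - 1) := by rw [hC0, Finset.sum_mul]
  have habs : ‖a * (-lam) ^ n‖ = ‖a‖ * t ^ n := by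
    rw [norm_mul, norm_pow, norm_neg]
  have habs' : ‖a * lam ^ n‖ = ‖a‖ * t ^ n := by
    rw [norm_mul, norm_pow]
  have h1up : ‖Q.eval (-lam)‖ ≤ ‖a‖ * t ^ n + C0 * t ^ (n - 1) := by
    have := hb (-lam) (by rw [norm_neg])
    calc ‖Q.eval (-lam)‖
        = ‖a * (-lam) ^ n + (Q.eval (-lam) - a * (-lam) ^ n)‖ := by ring_nf
      _ ≤ ‖a * (-lam) ^ n‖ + ‖Q.eval (-lam) - a * (-lam) ^ n‖ :=
          norm_add_le _ _
      _ ≤ ‖a‖ * t ^ n + C0 * t ^ (n - 1) := by rw [habs]; linarith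
  have h1lo : ‖a‖ * t ^ n - C0 * t ^ (n - 1) ≤ ‖Q.eval lam‖ := by
    have h := hb lam rfl
    have : ‖a * lam ^ n‖ ≤ ‖Q.eval lam‖ + ‖Q.eval lam - a * lam ^ n‖ := by
      calc ‖a * lam ^ n‖
          = ‖Q.eval lam - (Q.eval lam - a * lam ^ n)‖ := by ring_nf
        _ ≤ ‖Q.eval lam‖ + ‖Q.eval lam - a * lam ^ n‖ := by
            exact (norm_sub_le _ _).trans (le_refl _)
    rw [habs'] at this
    linarith
  have hkey : (2 + ε) * (C0 * t ^ (n - 1)) ≤ ε * (‖a‖ * t ^ n) := by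
    rcases Nat.eq_zero_or_pos n with h0 | hpos
    · have : C0 = 0 := by rw [hC0, h0]; simp
      rw [this]
      have : (0:ℝ) ≤ ε * (‖a‖ * t ^ n) := by positivity
      linarith
    · have hM2 : (2 + ε) * C0 / (ε * ‖a‖) ≤ t := le_trans (le_max_right _ _) hM
      have hd : 0 < ε * ‖a‖ := by positivity
      have h3 : (2 + ε) * C0 ≤ ε * ‖a‖ * t := by
        have := (div_le_iff₀ hd).mp hM2; linarith
      have htn : t ^ n = t * t ^ (n - 1) := by
        conv_lhs => rw [show n = (n - 1) + 1 by omega]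
        ring
      have hp : (0:ℝ) ≤ t ^ (n - 1) := by positivity
      calc (2 + ε) * (C0 * t ^ (n - 1)) = ((2 + ε) * C0) * t ^ (n - 1) := by ring
        _ ≤ (ε * ‖a‖ * t) * t ^ (n - 1) := mul_le_mul_of_nonneg_right h3 hp
        _ = ε * (‖a‖ * t ^ n) := by rw [htn]; ring
  nlinarith [mul_le_mul_of_nonneg_left h1lo (by linarith : (0:ℝ) ≤ 1 + ε)]

end AuxSym

/-- for symmetric collocation points, `limsup_{|λ|→∞} |R(λ)| ≤ 1` and `|R(λ)| = 1`
on the imaginary axis (where `I - λA` is invertible). -/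
theorem stabR_symmetric_bounds (s : ℕ) (hs : 1 ≤ s) (c : Fin s → ℝ) (hc : StrictMono c)
    (hsym : ∀ i : Fin s, c i + c i.rev = 1) :
    (∀ ε : ℝ, 0 < ε → ∃ M : ℝ, ∀ lam : ℂ, M ≤ ‖lam‖ →
      IsUnit (1 - lam • collocAC s c).det → ‖stabR s c lam‖ ≤ 1 + ε) ∧
    (∀ lam : ℂ, lam.re = 0 → IsUnit (1 - lam • collocAC s c).det →
      ‖stabR s c lam‖ = 1) := by
  have hrev : ∀ k : Fin s, c k.rev = 1 - c k := fun k => by have := hsym k; linarith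
  set Q := (qpoly s c).map (algebraMap ℝ ℂ) with hQdef
  have hQeval : ∀ lam : ℂ, Q.eval lam = (1 - lam • collocAC s c).det := by
    intro lam
    rw [hQdef, Polynomial.eval_map, ← Polynomial.aeval_def, qpoly_aeval]
  have hQnegeval : ∀ lam : ℂ, Q.eval (-lam) = (1 + lam • collocAC s c).det := by
    intro lam
    rw [hQeval, neg_smul, sub_neg_eq_add]
  have hQ0 : Q ≠ 0 := by
    intro h
    have h1 : Q.eval 0 = 1 := by rw [hQeval]; simp
    rw [h] at h1
    simp at h1
  have hmain : ∀ lam : ℂ, IsUnit (1 - lam • collocAC s c).det →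
      ‖stabR s c lam‖ * ‖Q.eval lam‖
        = ‖Q.eval (-lam)‖ := by
    intro lam h
    rw [hQeval, hQnegeval, ← norm_mul, mul_comm, det_symm_identity s c hrev lam h]
  have hdne : ∀ lam : ℂ, IsUnit (1 - lam • collocAC s c).det →
      ‖Q.eval lam‖ ≠ 0 := by
    intro lam h h0
    have : Q.eval lam ≠ 0 := by rw [hQeval]; exact h.ne_zero
    exact this (by rwa [norm_eq_zero] at h0)
  constructor
  · intro ε hε
    obtain ⟨M, hM⟩ := poly_ratio_bound Q hQ0 hε
    refine ⟨M, fun lam hlam h => ?_⟩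
    have hd := hdne lam h
    have hpos : 0 < ‖Q.eval lam‖ :=
      lt_of_le_of_ne (norm_nonneg _) (Ne.symm hd)
    have hb := hM lam hlam
    rw [← hmain lam h] at hb
    exact le_of_mul_le_mul_right hb hpos
  · intro lam hre h
    have hconj : -lam = (starRingEnd ℂ) lam := by
      apply Complex.ext <;> simp [hre]
    have habs : ‖Q.eval (-lam)‖ = ‖Q.eval lam‖ := by
      rw [hconj]
      have he : Q.eval ((starRingEnd ℂ) lam) = (starRingEnd ℂ) (Q.eval lam) := by
        rw [hQdef, Polynomial.eval_map, ← Polynomial.aeval_def, Polynomial.aeval_conj,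
          Polynomial.aeval_def, ← Polynomial.eval_map]
      rw [he, Complex.norm_conj]
    have hd := hdne lam h
    have := hmain lam h
    rw [habs] at this
    exact mul_right_cancel₀ hd (by rw [this, one_mul])
end

section
/- Let s ≥ 1 be an integer and c_1 < … < c_s be s distinct real numbers symmetric with respect to 1/2 (c_i + c_{s+1−i} = 1 for all i). If the polynomial τ(π) has no root on the imaginary axis iℝ, then the associated Runge–Kutta collocation method is Î-stable (I-stable, IS-stable and ISI-stable). -/
open Polynomial Matrix MeasureTheory

noncomputable section AuxHat

/-- polynomial antiderivative -/
def antider (p : Polynomial ℝ) : Polynomial ℝ :=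
  ∑ k ∈ p.support, Polynomial.C (p.coeff k / (k+1)) * Polynomial.X^(k+1)

lemma derivative_antider (p : Polynomial ℝ) : derivative (antider p) = p := by
  unfold antider
  rw [map_sum]
  conv_rhs => rw [p.as_sum_support]
  refine Finset.sum_congr rfl fun k _ => ?_
  rw [derivative_C_mul_X_pow]
  have : (k + 1 : ℝ) ≠ 0 := by positivity
  rw [← C_mul_X_pow_eq_monomial]
  push_cast
  congr 1
  rw [div_mul_cancel₀ _ this]

lemma eval_antider_zero (p : Polynomial ℝ) : (antider p).eval 0 = 0 := by
  unfold antider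
  rw [eval_finset_sum]
  refine Finset.sum_eq_zero fun k _ => ?_
  simp

lemma natDegree_antider_le (p : Polynomial ℝ) : (antider p).natDegree ≤ p.natDegree + 1 := by
  unfold antider
  refine (natDegree_sum_le _ _).trans ?_
  rw [Finset.fold_max_le]
  refine ⟨Nat.zero_le _, fun k hk => ?_⟩
  refine (natDegree_C_mul_le _ _).trans ?_
  simp only [natDegree_X_pow]
  exact Nat.add_le_add_right (le_natDegree_of_mem_supp _ hk) 1

lemma integral_poly_eval (p : Polynomial ℝ) (x : ℝ) :
    ∫ t in (0:ℝ)..x, p.eval t = (antider p).eval x := by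
  have h : ∀ t ∈ Set.uIcc (0:ℝ) x, HasDerivAt (fun y => (antider p).eval y) (p.eval t) t := by
    intro t _
    have := (antider p).hasDerivAt t
    rwa [derivative_antider] at this
  rw [intervalIntegral.integral_eq_sub_of_hasDerivAt h
    (p.continuous_aeval.intervalIntegrable _ _), eval_antider_zero, sub_zero]


section Colloc

variable {s : ℕ} {c : Fin s → ℝ}

/-- Lagrange basis polynomial over ℝ. -/
def lagP (c : Fin s → ℝ) (j : Fin s) : Polynomial ℝ := Lagrange.basis Finset.univ c j

lemma lagrangeFun_eq_eval (j : Fin s) (t : ℝ) :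
    lagrangeFun s c j t = (lagP c j).eval t := by
  unfold lagrangeFun lagP Lagrange.basis
  rw [eval_prod]
  refine Finset.prod_congr rfl fun k _ => ?_
  unfold Lagrange.basisDivisor
  rw [eval_mul, eval_C, eval_sub, eval_X, eval_C, div_eq_inv_mul]

lemma collocA_eq_eval (i j : Fin s) : collocA s c i j = (antider (lagP c j)).eval (c i) := by
  unfold collocA
  rw [Matrix.of_apply, ← integral_poly_eval]
  simp_rw [lagrangeFun_eq_eval]

lemma collocB_eq_eval (j : Fin s) : collocB s c j = (antider (lagP c j)).eval 1 := by
  unfold collocB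
  rw [← integral_poly_eval]
  simp_rw [lagrangeFun_eq_eval]

/-- complexified Lagrange basis polynomial -/
def lagPC (c : Fin s → ℝ) (j : Fin s) : Polynomial ℂ :=
  (lagP c j).map (algebraMap ℝ ℂ)

/-- complexified antiderivative of the Lagrange basis polynomial -/
def lagIC (c : Fin s → ℝ) (j : Fin s) : Polynomial ℂ :=
  (antider (lagP c j)).map (algebraMap ℝ ℂ)

lemma eval_map_real (p : Polynomial ℝ) (x : ℝ) :
    (p.map (algebraMap ℝ ℂ)).eval (x : ℂ) = ((p.eval x : ℝ) : ℂ) := by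
  have h : ((x : ℂ)) = algebraMap ℝ ℂ x := rfl
  rw [eval_map, h, eval₂_at_apply]
  rfl

lemma derivative_lagIC (j : Fin s) : derivative (lagIC c j) = lagPC c j := by
  unfold lagIC lagPC
  rw [derivative_map, derivative_antider]

lemma eval_lagIC (i j : Fin s) : (lagIC c j).eval ((c i : ℂ)) = collocAC s c i j := by
  unfold lagIC collocAC
  rw [eval_map_real, Matrix.map_apply, collocA_eq_eval]

lemma eval_lagIC_one (j : Fin s) : (lagIC c j).eval (1 : ℂ) = collocBC s c j := by
  unfold lagIC collocBC
  have : (1 : ℂ) = ((1 : ℝ) : ℂ) := by norm_num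
  rw [this, eval_map_real, collocB_eq_eval]

lemma eval_lagPC (hc : StrictMono c) (i j : Fin s) :
    (lagPC c j).eval ((c i : ℂ)) = if i = j then 1 else 0 := by
  unfold lagPC lagP
  rw [eval_map_real]
  rcases eq_or_ne i j with rfl | hij
  · rw [Lagrange.eval_basis_self (hc.injective.injOn) (Finset.mem_univ _)]
    simp
  · rw [Lagrange.eval_basis_of_ne (Ne.symm hij) (Finset.mem_univ _)]
    simp [hij]

lemma natDegree_lagIC_le (hs : 1 ≤ s) (hc : StrictMono c) (j : Fin s) :
    (lagIC c j).natDegree ≤ s := by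
  unfold lagIC
  refine natDegree_map_le.trans ?_
  refine (natDegree_antider_le _).trans ?_
  have : (lagP c j).natDegree = s - 1 := by
    unfold lagP
    rw [Lagrange.natDegree_basis (hc.injective.injOn) (Finset.mem_univ _), Finset.card_univ,
      Fintype.card_fin]
  rw [this]
  omega

end Colloc

section Key

variable {s : ℕ} {c : Fin s → ℝ}

/-- the complexified node polynomial -/
def piC (s : ℕ) (c : Fin s → ℝ) : Polynomial ℂ :=
  Lagrange.nodal Finset.univ (fun i => (c i : ℂ))

lemma cC_injective (hc : StrictMono c) : Function.Injective (fun i => ((c i : ℂ))) :=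
  fun i j h => hc.injective (Complex.ofReal_injective (by simpa using h))

lemma map_piPoly : (piPoly s c).map (algebraMap ℝ ℂ) = piC s c := by
  unfold piPoly piC
  rw [Polynomial.map_prod, Lagrange.nodal_eq]
  refine Finset.prod_congr rfl fun i _ => ?_
  rw [Polynomial.map_sub, Polynomial.map_X, Polynomial.map_C]
  rfl

lemma natDegree_piC : (piC s c).natDegree = s := by
  unfold piC
  rw [Lagrange.natDegree_nodal, Finset.card_univ, Fintype.card_fin]

lemma coeff_piC (k : ℕ) : (piC s c).coeff k = ((piPoly s c).coeff k : ℂ) := by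
  rw [← map_piPoly, coeff_map]
  rfl

lemma natDegree_piPoly_le : (piPoly s c).natDegree ≤ s := by
  unfold piPoly
  refine (natDegree_prod_le _ _).trans ?_
  refine le_trans (Finset.sum_le_card_nsmul _ _ 1 fun i _ => natDegree_X_sub_C_le _) ?_
  simp

lemma eval_piC_node (i : Fin s) : (piC s c).eval ((c i : ℂ)) = 0 := by
  have := Lagrange.eval_nodal_at_node (s := Finset.univ) (v := fun i : Fin s => ((c i : ℂ)))
    (Finset.mem_univ i)
  simpa [piC] using this

/-- a polynomial of degree ≤ s vanishing at the s nodes is a multiple of πC -/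
lemma eq_C_mul_piC (hs : 1 ≤ s) (hc : StrictMono c) {q : Polynomial ℂ} (hq : q.natDegree ≤ s)
    (hroots : ∀ i, q.eval ((c i : ℂ)) = 0) : q = C (q.coeff s) * piC s c := by
  have hmonic : (piC s c).Monic := Lagrange.nodal_monic
  have hcs : (piC s c).coeff s = 1 := by
    have := hmonic.leadingCoeff
    rwa [leadingCoeff, natDegree_piC] at this
  set r := q - C (q.coeff s) * piC s c with hr
  have hrs : r.coeff s = 0 := by
    rw [hr, coeff_sub, coeff_C_mul, hcs, mul_one, sub_self]
  have hrle : r.natDegree ≤ s := by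
    refine (natDegree_sub_le _ _).trans (max_le hq ?_)
    refine (natDegree_C_mul_le _ _).trans ?_
    rw [natDegree_piC]
  have hrlt : r.natDegree < s := by
    rcases eq_or_ne r 0 with h | h
    · rw [h, natDegree_zero]; omega
    · refine lt_of_le_of_ne hrle fun hh => h ?_
      refine leadingCoeff_eq_zero.mp ?_
      rw [leadingCoeff, hh, hrs]
  have hr0 : r = 0 := by
    refine eq_zero_of_natDegree_lt_card_of_eval_eq_zero r (cC_injective hc) (fun i => ?_) ?_
    · rw [hr, eval_sub, eval_mul, eval_C, hroots, eval_piC_node, mul_zero, sub_self]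
    · rwa [Fintype.card_fin]
  exact sub_eq_zero.mp hr0

lemma eq_zero_of_derivative_eq_C_mul {lam : ℂ} (hlam : lam ≠ 0) {p : Polynomial ℂ}
    (h : derivative p = C lam * p) : p = 0 := by
  by_contra hp
  have h1 : (derivative p).coeff p.natDegree = 0 := by
    rw [coeff_derivative, coeff_eq_zero_of_natDegree_lt (lt_add_one _), zero_mul]
  rw [h, coeff_C_mul] at h1
  rcases mul_eq_zero.mp h1 with h2 | h2
  · exact hlam h2
  · exact hp (leadingCoeff_eq_zero.mp h2)

lemma eval_zero_iterate_derivative (p : Polynomial ℂ) (k : ℕ) :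
    (derivative^[k] p).eval 0 = (k.factorial : ℂ) * p.coeff k := by
  rw [← coeff_zero_eq_eval_zero, coeff_iterate_derivative]
  simp [Nat.descFactorial_self, nsmul_eq_mul]

lemma aeval_tauP (p : Polynomial ℝ) (z : ℂ) (n : ℕ) (hp : p.natDegree ≤ n) :
    (aeval z) (tauP p) = ∑ k ∈ Finset.range (n+1), (k.factorial : ℂ) * (p.coeff k : ℂ) * z ^ k := by
  unfold tauP
  rw [map_sum]
  rw [Finset.sum_subset (Polynomial.supp_subset_range (Nat.lt_succ_of_le hp))]
  · refine Finset.sum_congr rfl fun k _ => ?_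
    rw [_root_.map_mul, _root_.map_pow, aeval_X, aeval_C, _root_.map_mul]
    simp only [Complex.coe_algebraMap]
    push_cast
    ring
  · intro k _ hk
    rw [Polynomial.notMem_support_iff.mp hk]
    simp

/-- key uniqueness lemma for collocation polynomials -/
lemma colloc_unique (hs : 1 ≤ s) (hc : StrictMono c) {lam : ℂ} (hlam : lam ≠ 0)
    (hne : (aeval lam⁻¹) (tauP (piPoly s c)) ≠ 0)
    {u : Polynomial ℂ} (hdeg : u.natDegree ≤ s) (h0 : u.eval 0 = 0)
    (hcol : ∀ i, u.derivative.eval ((c i : ℂ)) = lam * u.eval ((c i : ℂ))) : u = 0 := by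
  classical
  set q := derivative u - C lam * u with hqdef
  have hqdeg : q.natDegree ≤ s := by
    refine (natDegree_sub_le _ _).trans (max_le ?_ ?_)
    · exact (natDegree_derivative_le _).trans ((Nat.sub_le _ _).trans hdeg)
    · exact (natDegree_C_mul_le _ _).trans hdeg
  have hqroots : ∀ i, q.eval ((c i : ℂ)) = 0 := by
    intro i
    rw [hqdef, eval_sub, eval_mul, eval_C, hcol i, sub_self]
  have hq : q = C (q.coeff s) * piC s c := eq_C_mul_piC hs hc hqdeg hqroots
  set γ := q.coeff s with hγ
  set F : Polynomial ℂ := ∑ k ∈ Finset.range (s+1), C (lam⁻¹ ^ (k+1)) * derivative^[k] (piC s c)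
    with hF
  have hFkey : C lam * F - derivative F = piC s c := by
    have h1 : C lam * F - derivative F =
        ∑ k ∈ Finset.range (s+1),
          (C (lam⁻¹ ^ k) * derivative^[k] (piC s c) -
           C (lam⁻¹ ^ (k+1)) * derivative^[k+1] (piC s c)) := by
      rw [hF, Finset.mul_sum, map_sum, ← Finset.sum_sub_distrib]
      refine Finset.sum_congr rfl fun k _ => ?_
      rw [derivative_C_mul, ← Function.iterate_succ_apply' derivative, ← mul_assoc,
        ← _root_.map_mul, pow_succ', ← mul_assoc, mul_inv_cancel₀ hlam, one_mul]
    rw [h1, Finset.sum_range_sub' (fun k => C (lam⁻¹ ^ k) * derivative^[k] (piC s c))]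
    have hz : derivative^[s+1] (piC s c) = 0 := by
      refine iterate_derivative_eq_zero ?_
      rw [natDegree_piC]; omega
    rw [hz, mul_zero, sub_zero, pow_zero, Polynomial.C_1, one_mul, Function.iterate_zero_apply]
  have hw : derivative (u + C γ * F) = C lam * (u + C γ * F) := by
    have hdu : derivative u = C lam * u + C γ * piC s c := by
      have h2 : derivative u - C lam * u = C γ * piC s c := by rw [← hqdef]; exact hq
      linear_combination h2
    have hdF : derivative F = C lam * F - piC s c := by
      linear_combination -hFkey
    rw [derivative_add, derivative_C_mul, hdu, hdF]
    ring
  have hzero : u + C γ * F = 0 := eq_zero_of_derivative_eq_C_mul hlam hw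
  have hF0 : F.eval 0 = lam⁻¹ * (aeval lam⁻¹) (tauP (piPoly s c)) := by
    rw [hF, eval_finset_sum]
    rw [aeval_tauP (piPoly s c) lam⁻¹ s natDegree_piPoly_le, Finset.mul_sum]
    refine Finset.sum_congr rfl fun k _ => ?_
    rw [eval_mul, eval_C, eval_zero_iterate_derivative, coeff_piC, pow_succ']
    ring
  have hγ0 : γ = 0 := by
    have := congrArg (Polynomial.eval 0) hzero
    rw [eval_add, eval_mul, eval_C, h0, zero_add, eval_zero, hF0] at this
    rcases mul_eq_zero.mp this with h | h
    · exact h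
    · rcases mul_eq_zero.mp h with h' | h'
      · exact absurd h' (inv_ne_zero hlam)
      · exact absurd h' hne
  have hq0 : q = 0 := by rw [hq, hγ0, Polynomial.C_0, zero_mul]
  have hdu : derivative u = C lam * u := by
    have h'' : derivative u - C lam * u = 0 := by rw [← hqdef]; exact hq0
    linear_combination h''
  exact eq_zero_of_derivative_eq_C_mul hlam hdu

end Key

end AuxHat


noncomputable section AuxHat2

open Polynomial

variable {s : ℕ} {c : Fin s → ℝ}

/-- collocation polynomial attached to a vector of stage values -/
def uVec (c : Fin s → ℝ) (e lam : ℂ) (v : Fin s → ℂ) : Polynomial ℂ :=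
  Polynomial.C e + Polynomial.C lam * ∑ j, Polynomial.C (v j) * lagIC c j

lemma uVec_natDegree_le (hs : 1 ≤ s) (hc : StrictMono c) (e lam : ℂ) (v : Fin s → ℂ) :
    (uVec c e lam v).natDegree ≤ s := by
  unfold uVec
  refine (natDegree_add_le _ _).trans (max_le (by simp) ?_)
  refine (natDegree_mul_le).trans ?_
  rw [natDegree_C, zero_add]
  refine (natDegree_sum_le _ _).trans ?_
  rw [Finset.fold_max_le]
  refine ⟨Nat.zero_le _, fun j _ => ?_⟩
  exact (natDegree_mul_le).trans (by simpa using natDegree_lagIC_le hs hc j)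

lemma uVec_eval_zero (e lam : ℂ) (v : Fin s → ℂ) : (uVec c e lam v).eval 0 = e := by
  unfold uVec
  rw [eval_add, eval_C, eval_mul, eval_C, eval_finset_sum]
  have : ∀ j ∈ Finset.univ, ((Polynomial.C (v j) * lagIC c j).eval (0:ℂ)) = 0 := by
    intro j _
    rw [eval_mul, eval_C]
    have h0 : ((0:ℂ)) = ((0:ℝ):ℂ) := by norm_num
    rw [lagIC, h0, eval_map_real, eval_antider_zero]
    simp
  rw [Finset.sum_congr rfl this]
  simp

lemma uVec_eval_node (e lam : ℂ) (v : Fin s → ℂ) (i : Fin s) :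
    (uVec c e lam v).eval ((c i : ℂ)) = e + lam * (collocAC s c *ᵥ v) i := by
  unfold uVec
  rw [eval_add, eval_C, eval_mul, eval_C, eval_finset_sum]
  congr 1
  rw [Matrix.mulVec]
  congr 1
  simp only [eval_mul, eval_C, eval_lagIC]
  rw [dotProduct]
  exact Finset.sum_congr rfl fun j _ => mul_comm _ _

lemma uVec_eval_one (e lam : ℂ) (v : Fin s → ℂ) :
    (uVec c e lam v).eval 1 = e + lam * (collocBC s c ⬝ᵥ v) := by
  unfold uVec
  rw [eval_add, eval_C, eval_mul, eval_C, eval_finset_sum]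
  congr 1
  rw [dotProduct]
  simp only [eval_mul, eval_C, eval_lagIC_one]
  exact congrArg (fun t => lam * t)
    (Finset.sum_congr rfl fun j _ => mul_comm (v j) (collocBC s c j))

lemma uVec_deriv_eval_node (hc : StrictMono c) (e lam : ℂ) (v : Fin s → ℂ) (i : Fin s) :
    (derivative (uVec c e lam v)).eval ((c i : ℂ)) = lam * v i := by
  unfold uVec
  rw [derivative_add, derivative_C, zero_add, derivative_C_mul, eval_mul, eval_C]
  rw [derivative_sum]
  rw [eval_finset_sum]
  congr 1
  have : ∀ j ∈ Finset.univ,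
      (derivative (Polynomial.C (v j) * lagIC c j)).eval ((c i : ℂ)) =
        if j = i then v j else 0 := by
    intro j _
    rw [derivative_C_mul, eval_mul, eval_C, derivative_lagIC, eval_lagPC hc]
    rcases eq_or_ne i j with rfl | hij
    · simp
    · simp [hij, Ne.symm hij]
  rw [Finset.sum_congr rfl this, Finset.sum_ite_eq' Finset.univ i v]
  simp

/-- invertibility of `1 - λ A` -/
lemma isUnit_det_colloc (hs : 1 ≤ s) (hc : StrictMono c) {lam : ℂ}
    (hne : lam ≠ 0 → (Polynomial.aeval lam⁻¹) (tauP (piPoly s c)) ≠ 0) :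
    IsUnit (1 - lam • collocAC s c).det := by
  rcases eq_or_ne lam 0 with rfl | hlam
  · simp
  rw [isUnit_iff_ne_zero]
  intro hdet0
  obtain ⟨v, hv, hveq⟩ := (Matrix.exists_mulVec_eq_zero_iff).mpr hdet0
  have hvv : ∀ i, v i = lam * (collocAC s c *ᵥ v) i := by
    intro i
    have h := congrFun hveq i
    rw [Matrix.sub_mulVec, Matrix.smul_mulVec, Matrix.one_mulVec] at h
    have h2 : v i - lam * (collocAC s c *ᵥ v) i = 0 := by simpa using h
    linear_combination h2
  set u := uVec c 0 lam v with hu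
  have hu0 : u = 0 := by
    refine colloc_unique hs hc hlam (hne hlam) (uVec_natDegree_le hs hc _ _ _)
      (uVec_eval_zero _ _ _) fun i => ?_
    rw [hu, uVec_deriv_eval_node hc, uVec_eval_node, zero_add, ← hvv i]
  refine hv (funext fun i => ?_)
  have := uVec_eval_node (c := c) 0 lam v i
  rw [← hu, hu0, eval_zero, zero_add, ← hvv i] at this
  exact this.symm

lemma conj_eq_neg_of_re_zero {lam : ℂ} (hre : lam.re = 0) : (starRingEnd ℂ) lam = -lam := by
  apply Complex.ext <;> simp [hre]

lemma eval_map_conj (p : Polynomial ℂ) (x : ℂ) :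
    (p.map (starRingEnd ℂ)).eval ((starRingEnd ℂ) x) = (starRingEnd ℂ) (p.eval x) := by
  rw [eval_map, eval₂_at_apply]

/-- the modulus of the stability function equals 1 on the imaginary axis -/
lemma abs_stabR_eq_one (hs : 1 ≤ s) (hc : StrictMono c)
    (hsym : ∀ i : Fin s, c i + c i.rev = 1) {lam : ℂ} (hlam : lam ≠ 0) (hre : lam.re = 0)
    (hne : (Polynomial.aeval (-lam)⁻¹) (tauP (piPoly s c)) ≠ 0)
    (hunit : IsUnit (1 - lam • collocAC s c).det) :
    ‖stabR s c lam‖ = 1 := by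
  set g : Fin s → ℂ := (1 - lam • collocAC s c)⁻¹ *ᵥ (fun _ => 1) with hg
  have hA : (1 - lam • collocAC s c) *ᵥ g = fun _ => 1 := by
    rw [hg, Matrix.mulVec_mulVec, Matrix.mul_nonsing_inv _ hunit, Matrix.one_mulVec]
  have hgi : ∀ i, g i = 1 + lam * (collocAC s c *ᵥ g) i := by
    intro i
    have h := congrFun hA i
    rw [Matrix.sub_mulVec, Matrix.smul_mulVec, Matrix.one_mulVec] at h
    have h2 : g i - lam * (collocAC s c *ᵥ g) i = 1 := by simpa using h
    linear_combination h2
  set u := uVec c 1 lam g with hu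
  have hucol : ∀ i, (derivative u).eval ((c i : ℂ)) = lam * u.eval ((c i : ℂ)) := by
    intro i
    rw [hu, uVec_deriv_eval_node hc, uVec_eval_node, ← hgi i]
  have hu0 : u.eval 0 = 1 := uVec_eval_zero _ _ _
  have hu1 : u.eval 1 = stabR s c lam := by
    rw [hu, uVec_eval_one]
    rfl
  -- reflected polynomial
  set ut := u.comp (1 - X) with hut
  -- conjugated polynomial
  set us := u.map (starRingEnd ℂ) with hus
  have hnode : ∀ i : Fin s, (1 : ℂ) - (c i : ℂ) = ((c i.rev : ℂ)) := by
    intro i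
    have := hsym i
    push_cast [show c i.rev = 1 - c i by linarith]
    ring
  have hut_eval : ∀ i, ut.eval ((c i : ℂ)) = u.eval ((c i.rev : ℂ)) := by
    intro i
    rw [hut, eval_comp, eval_sub, eval_one, eval_X, hnode i]
  have hutcol : ∀ i, (derivative ut).eval ((c i : ℂ)) = (-lam) * ut.eval ((c i : ℂ)) := by
    intro i
    rw [hut, derivative_comp_one_sub_X, eval_neg, eval_comp, eval_sub, eval_one, eval_X,
      hnode i, hucol i.rev, hut_eval i]
    ring
  have huscol : ∀ i, (derivative us).eval ((c i : ℂ)) = (-lam) * us.eval ((c i : ℂ)) := by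
    intro i
    have hcr : ((c i : ℂ)) = (starRingEnd ℂ) ((c i : ℂ)) := (Complex.conj_ofReal _).symm
    rw [hus, derivative_map, hcr, eval_map_conj, eval_map_conj, hucol i, _root_.map_mul,
      conj_eq_neg_of_re_zero hre]
  have hw : ut - Polynomial.C (ut.eval 0) * us = 0 := by
    refine colloc_unique hs hc (neg_ne_zero.mpr hlam) hne ?_ ?_ ?_
    · refine (natDegree_sub_le _ _).trans (max_le ?_ ?_)
      · rw [hut, natDegree_comp]
        have h1 : (1 - X : Polynomial ℂ).natDegree = 1 := by
          rw [show (1 - X : Polynomial ℂ) = -(X - Polynomial.C 1) by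
              rw [Polynomial.C_1]; ring,
            natDegree_neg, natDegree_X_sub_C]
        rw [h1, mul_one]
        exact uVec_natDegree_le hs hc _ _ _
      · refine (natDegree_C_mul_le _ _).trans ?_
        rw [hus]
        exact natDegree_map_le.trans (uVec_natDegree_le hs hc _ _ _)
    · rw [eval_sub, eval_mul, eval_C]
      have h0 : ((0:ℂ)) = (starRingEnd ℂ) 0 := by simp
      rw [hus, h0, eval_map_conj, hu0]
      simp
    · intro i
      rw [derivative_sub, derivative_C_mul, eval_sub, eval_mul, eval_C, hutcol i, huscol i,
        eval_sub, eval_mul, eval_C]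
      ring
  have hkey := sub_eq_zero.mp hw
  have h1 : ut.eval 1 = 1 := by
    rw [hut, eval_comp, eval_sub, eval_one, eval_X, sub_self, hu0]
  have h2 : ut.eval 0 = stabR s c lam := by
    rw [hut, eval_comp, eval_sub, eval_one, eval_X, sub_zero, hu1]
  have h3 : us.eval 1 = (starRingEnd ℂ) (stabR s c lam) := by
    have hone : ((1:ℂ)) = (starRingEnd ℂ) 1 := by simp
    rw [hus, hone, eval_map_conj, hu1]
  have hfinal : (1 : ℂ) = stabR s c lam * (starRingEnd ℂ) (stabR s c lam) := by
    have := congrArg (Polynomial.eval (1:ℂ)) hkey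
    rw [h1, eval_mul, eval_C, h2, h3] at this
    exact this
  have habs : ‖stabR s c lam‖ ^ 2 = 1 := by
    rw [Complex.sq_norm]
    have := hfinal.symm
    rw [Complex.mul_conj] at this
    exact_mod_cast this
  nlinarith [norm_nonneg (stabR s c lam)]

end AuxHat2


noncomputable section AuxHat3

open Polynomial Matrix Filter Topology

variable {s : ℕ} {c : Fin s → ℝ}

lemma aeval_tauP_zero (p : Polynomial ℝ) : (Polynomial.aeval (0:ℂ)) (tauP p) = (p.coeff 0 : ℂ) := by
  rw [aeval_tauP p 0 p.natDegree le_rfl, Finset.sum_eq_single 0]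
  · simp
  · intro k _ hk
    rw [zero_pow hk, mul_zero]
  · intro h
    exact absurd (Finset.mem_range.mpr (Nat.succ_pos _)) h

lemma c_ne_zero (hroot : ∀ z : ℂ, z.re = 0 → (Polynomial.aeval z) (tauP (piPoly s c)) ≠ 0)
    (i : Fin s) : c i ≠ 0 := by
  intro h
  refine hroot 0 (by simp) ?_
  rw [aeval_tauP_zero, coeff_zero_eq_eval_zero]
  unfold piPoly
  rw [eval_prod]
  rw [Finset.prod_eq_zero (Finset.mem_univ i) (by simp [h])]
  simp

lemma detAC_ne_zero (hs : 1 ≤ s) (hc : StrictMono c) (hc0 : ∀ i, c i ≠ 0) :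
    (collocAC s c).det ≠ 0 := by
  intro hdet
  obtain ⟨v, hv, hveq⟩ := Matrix.exists_mulVec_eq_zero_iff.mpr hdet
  set u := uVec c 0 1 v with hu
  have hu0 : u = 0 := by
    set f : Option (Fin s) → ℂ := fun o => o.elim 0 (fun i => (c i : ℂ)) with hf
    have hfinj : Function.Injective f := by
      intro a b hab
      match a, b with
      | none, none => rfl
      | none, some j =>
        exfalso; apply hc0 j
        have : (0:ℂ) = (c j : ℂ) := hab
        exact_mod_cast this.symm
      | some j, none =>
        exfalso; apply hc0 j
        have : ((c j : ℂ)) = 0 := hab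
        exact_mod_cast this
      | some a, some b =>
        have : ((c a : ℂ)) = (c b : ℂ) := hab
        have := hc.injective (by exact_mod_cast this)
        rw [this]
    refine eq_zero_of_natDegree_lt_card_of_eval_eq_zero u hfinj (fun o => ?_) ?_
    · match o with
      | none =>
        simpa [hf] using uVec_eval_zero (c := c) 0 1 v
      | some i =>
        have := uVec_eval_node (c := c) 0 1 v i
        rw [← hu, hveq] at this
        simpa [hf] using this
    · rw [Fintype.card_option, Fintype.card_fin]
      exact Nat.lt_succ_of_le (uVec_natDegree_le hs hc _ _ _)
  refine hv (funext fun i => ?_)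
  have := uVec_deriv_eval_node hc 0 1 v i
  rw [← hu, hu0] at this
  simpa using this.symm

/-- the matrix `I - X·A` over `ℂ[X]` -/
def matP (s : ℕ) (c : Fin s → ℝ) : Matrix (Fin s) (Fin s) (Polynomial ℂ) :=
  (X : Polynomial ℂ) • (-(collocAC s c)).map Polynomial.C +
    (1 : Matrix (Fin s) (Fin s) ℂ).map Polynomial.C

/-- determinant polynomial -/
def dP (s : ℕ) (c : Fin s → ℝ) : Polynomial ℂ := (matP s c).det

/-- adjugate polynomials -/
def nP (s : ℕ) (c : Fin s → ℝ) (i j : Fin s) : Polynomial ℂ := (matP s c).adjugate i j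

lemma matP_apply (i j : Fin s) : matP s c i j =
    X * Polynomial.C (-(collocAC s c) i j) + Polynomial.C ((1 : Matrix (Fin s) (Fin s) ℂ) i j) := by
  rcases eq_or_ne i j with rfl | h
  · simp [matP, Matrix.map_apply, smul_eq_mul, Matrix.one_apply]
  · simp [matP, Matrix.map_apply, smul_eq_mul, Matrix.one_apply, h]

lemma matP_map_eval (lam : ℂ) :
    (matP s c).map (Polynomial.eval lam) = 1 - lam • collocAC s c := by
  ext i j
  rcases eq_or_ne i j with rfl | h
  · simp [matP, Matrix.one_apply, Matrix.map_apply]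
    ring
  · simp [matP, Matrix.one_apply, h, Matrix.map_apply]
    ring

lemma eval_dP (lam : ℂ) : (dP s c).eval lam = (1 - lam • collocAC s c).det := by
  have h := RingHom.map_det (Polynomial.evalRingHom lam) (matP s c)
  rw [RingHom.mapMatrix_apply, Polynomial.coe_evalRingHom] at h
  rw [← matP_map_eval lam, ← h]
  rfl

lemma eval_nP (lam : ℂ) (i j : Fin s) :
    (nP s c i j).eval lam = (1 - lam • collocAC s c).adjugate i j := by
  have h := RingHom.map_adjugate (Polynomial.evalRingHom lam) (matP s c)
  rw [RingHom.mapMatrix_apply, RingHom.mapMatrix_apply, Polynomial.coe_evalRingHom] at h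
  rw [← matP_map_eval lam, ← h]
  rfl

lemma natDegree_dP_le : (dP s c).natDegree ≤ s := by
  have := Polynomial.natDegree_det_X_add_C_le (-(collocAC s c)) 1
  rwa [Fintype.card_fin] at this

lemma coeff_dP : (dP s c).coeff s = (-1)^s * (collocAC s c).det := by
  have := Polynomial.coeff_det_X_add_C_card (-(collocAC s c)) 1
  rw [Fintype.card_fin] at this
  unfold dP matP
  rw [this, Matrix.det_neg, Fintype.card_fin]

set_option maxHeartbeats 1000000 in
lemma natDegree_nP_le (i j : Fin s) : (nP s c i j).natDegree ≤ s := by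
  unfold nP
  -- adjugate entries are determinants of modified matrices; crude bound suffices
  rw [Matrix.adjugate_apply]
  rw [Matrix.det_apply']
  refine (natDegree_sum_le _ _).trans ?_
  rw [Finset.fold_max_le]
  refine ⟨Nat.zero_le _, fun σ _ => ?_⟩
  refine (natDegree_mul_le).trans ?_
  rw [natDegree_intCast, zero_add]
  refine (natDegree_prod_le _ _).trans ?_
  refine le_trans (Finset.sum_le_card_nsmul _ _ 1 fun k _ => ?_)
    (by rw [Finset.card_univ, Fintype.card_fin, smul_eq_mul, mul_one])
  -- each entry of the updated matrix has natDegree ≤ 1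
  rw [Matrix.updateRow_apply]
  by_cases h : σ k = j
  · rw [if_pos h]
    rcases eq_or_ne k i with rfl | hk
    · simp [Pi.single_apply]
    · simp [Pi.single_apply, hk]
  · rw [if_neg h, matP_apply]
    refine (natDegree_add_le _ _).trans (max_le ((natDegree_mul_le).trans ?_)
      ((natDegree_C _).le.trans (by omega)))
    rw [natDegree_C]
    simpa using natDegree_X_le

end AuxHat3


noncomputable section AuxHat4

open Polynomial Matrix Filter Topology

lemma eventually_ne_zero_cocompact : ∀ᶠ y : ℝ in cocompact ℝ, y ≠ 0 := by
  have h : {(0:ℝ)}ᶜ ∈ cocompact ℝ :=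
    Filter.mem_cocompact.mpr ⟨{0}, isCompact_singleton, le_refl _⟩
  exact Filter.eventually_iff_exists_mem.mpr ⟨_, h, fun y hy => hy⟩

lemma tendsto_inv_yI : Filter.Tendsto (fun y : ℝ => (((y : ℂ) * Complex.I))⁻¹)
    (cocompact ℝ) (nhds 0) := by
  rw [tendsto_zero_iff_norm_tendsto_zero]
  have h1 : ∀ y : ℝ, ‖(((y : ℂ) * Complex.I))⁻¹‖ = |y|⁻¹ := by
    intro y
    rw [norm_inv, norm_mul, Complex.norm_I, mul_one, Complex.norm_real, Real.norm_eq_abs]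
  simp_rw [h1]
  have h2 : Filter.Tendsto (fun y : ℝ => |y|) (cocompact ℝ) atTop := by
    have := tendsto_norm_cocompact_atTop (E := ℝ)
    exact this.congr (fun y => Real.norm_eq_abs y)
  exact tendsto_inv_atTop_zero.comp h2

lemma tendsto_eval_div_pow (r : Polynomial ℂ) (n : ℕ) (hr : r.natDegree ≤ n) :
    Filter.Tendsto (fun y : ℝ => r.eval ((y : ℂ) * Complex.I) / ((y : ℂ) * Complex.I) ^ n)
      (cocompact ℝ) (nhds (r.coeff n)) := by
  have key : Filter.Tendsto (fun y : ℝ => ∑ k ∈ Finset.range (n+1),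
      r.coeff k * ((((y : ℂ) * Complex.I))⁻¹) ^ (n - k)) (cocompact ℝ) (nhds (r.coeff n)) := by
    have hlim : ∀ k ∈ Finset.range (n+1), Filter.Tendsto
        (fun y : ℝ => r.coeff k * ((((y : ℂ) * Complex.I))⁻¹) ^ (n - k)) (cocompact ℝ)
        (nhds (if k = n then r.coeff n else 0)) := by
      intro k hk
      rcases eq_or_ne k n with rfl | hkn
      · simp only [Nat.sub_self, pow_zero, mul_one, if_pos rfl]
        exact tendsto_const_nhds
      · rw [if_neg hkn]
        have hpos : 0 < n - k := by
          rw [Finset.mem_range] at hk; omega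
        have h0 : Filter.Tendsto (fun y : ℝ => ((((y : ℂ) * Complex.I))⁻¹) ^ (n - k))
            (cocompact ℝ) (nhds 0) := by
          have := tendsto_inv_yI.pow (n - k)
          rwa [zero_pow (by omega : n - k ≠ 0)] at this
        have := h0.const_mul (r.coeff k)
        rwa [mul_zero] at this
    have hsum := tendsto_finset_sum (Finset.range (n+1)) hlim
    have : ∑ k ∈ Finset.range (n+1), (if k = n then r.coeff n else 0) = r.coeff n := by
      rw [Finset.sum_ite_eq' (Finset.range (n+1)) n (fun _ => r.coeff n)]
      simp
    rwa [this] at hsum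
  refine key.congr' ?_
  filter_upwards [eventually_ne_zero_cocompact] with y hy
  have hz : ((y : ℂ) * Complex.I) ≠ 0 := by
    simp [Complex.ext_iff, hy]
  rw [eq_comm, Polynomial.eval_eq_sum_range' (Nat.lt_succ_of_le hr), Finset.sum_div]
  refine Finset.sum_congr rfl fun k hk => ?_
  rw [Finset.mem_range] at hk
  rw [inv_pow, mul_div_assoc, pow_sub₀ _ hz (by omega : k ≤ n), mul_inv, inv_inv]
  ring

/-- boundedness of a ratio of polynomials on the imaginary axis -/
lemma exists_bound_ratio (n : ℕ) (d p : Polynomial ℂ) (hdn : d.natDegree ≤ n)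
    (hdc : d.coeff n ≠ 0) (hdz : ∀ y : ℝ, d.eval ((y : ℂ) * Complex.I) ≠ 0)
    (hp : p.natDegree ≤ n) :
    ∃ M : ℝ, ∀ y : ℝ, ‖p.eval ((y : ℂ) * Complex.I) /
      d.eval ((y : ℂ) * Complex.I)‖ ≤ M := by
  set f : ℝ → ℝ := fun y => ‖p.eval ((y : ℂ) * Complex.I) /
    d.eval ((y : ℂ) * Complex.I)‖ with hf
  have hcyI : Continuous fun y : ℝ => ((y : ℂ) * Complex.I) :=
    Complex.continuous_ofReal.mul continuous_const
  have hcont : Continuous f := by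
    apply continuous_norm.comp
    exact ((p.continuous.comp hcyI).div (d.continuous.comp hcyI) hdz)
  set L : ℝ := ‖p.coeff n / d.coeff n‖ with hL
  have hlim : Filter.Tendsto f (cocompact ℝ) (nhds L) := by
    have h3 : Filter.Tendsto (fun y : ℝ =>
        (p.eval ((y : ℂ) * Complex.I) / ((y : ℂ) * Complex.I) ^ n) /
        (d.eval ((y : ℂ) * Complex.I) / ((y : ℂ) * Complex.I) ^ n)) (cocompact ℝ)
        (nhds (p.coeff n / d.coeff n)) :=
      (tendsto_eval_div_pow p n hp).div (tendsto_eval_div_pow d n hdn) hdc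
    have h4 : Filter.Tendsto (fun y : ℝ =>
        p.eval ((y : ℂ) * Complex.I) / d.eval ((y : ℂ) * Complex.I)) (cocompact ℝ)
        (nhds (p.coeff n / d.coeff n)) := by
      refine h3.congr' ?_
      filter_upwards [eventually_ne_zero_cocompact] with y hy
      have hz : (((y : ℂ) * Complex.I)) ^ n ≠ 0 := by
        apply pow_ne_zero
        simp [Complex.ext_iff, hy]
      have hd := hdz y
      field_simp
    exact (continuous_norm.tendsto _).comp h4
  have hev : ∀ᶠ y : ℝ in cocompact ℝ, f y ≤ L + 1 :=
    hlim.eventually (ge_mem_nhds (lt_add_one L))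
  set g : ℝ → ℝ := fun y => max (f y) (L + 1) with hg
  have hgcont : Continuous g := hcont.max continuous_const
  have hgev : ∀ᶠ y : ℝ in cocompact ℝ, g y ≤ g 0 := by
    filter_upwards [hev] with y hy
    rw [hg]
    exact le_trans (max_le hy (le_refl _)) (le_max_right _ _)
  obtain ⟨x, hx⟩ := hgcont.exists_forall_ge' (0 : ℝ) hgev
  exact ⟨g x, fun y => le_trans (le_max_left _ _) (hx y)⟩

end AuxHat4

/-- a collocation method with points symmetric with respect to `1/2` such that
`τ(π)` has no root on `iℝ` is `Î`-stable. -/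
theorem symmetric_hatI_stable (s : ℕ) (hs : 1 ≤ s) (c : Fin s → ℝ) (hc : StrictMono c)
    (hsym : ∀ i : Fin s, c i + c i.rev = 1)
    (hroot : ∀ z : ℂ, z.re = 0 → Polynomial.aeval z (tauP (piPoly s c)) ≠ 0) :
    IStable s c ∧ ISStable s c ∧ ISIStable s c := by
  have hinvre : ∀ lam : ℂ, lam.re = 0 → (lam⁻¹).re = 0 := fun lam h => by
    rw [Complex.inv_re, h, zero_div]
  have hunit : ∀ lam : ℂ, lam.re = 0 → IsUnit (1 - lam • collocAC s c).det :=
    fun lam h => isUnit_det_colloc hs hc (fun _ => hroot lam⁻¹ (hinvre lam h))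
  have hdetA : (collocAC s c).det ≠ 0 := detAC_ne_zero hs hc (c_ne_zero hroot)
  have hdz : ∀ y : ℝ, (dP s c).eval ((y : ℂ) * Complex.I) ≠ 0 := by
    intro y
    rw [eval_dP]
    exact (hunit ((y : ℂ) * Complex.I) (by simp)).ne_zero
  have hdc : (dP s c).coeff s ≠ 0 := by
    rw [coeff_dP]
    exact mul_ne_zero (pow_ne_zero _ (by norm_num)) hdetA
  have hform : ∀ lam : ℂ, lam.re = 0 → lam = ((lam.im : ℂ)) * Complex.I := by
    intro lam h
    apply Complex.ext <;> simp [h]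
  have hentry : ∀ lam : ℂ, ∀ i j : Fin s, (1 - lam • collocAC s c)⁻¹ i j =
      (nP s c i j).eval lam / (dP s c).eval lam := by
    intro lam i j
    rw [Matrix.inv_def, Matrix.smul_apply, smul_eq_mul, Ring.inverse_eq_inv, ← eval_dP lam,
      ← eval_nP lam, div_eq_inv_mul]
  -- uniform bound for the entries of the inverse
  have hISIbound : ∃ M : ℝ, 0 ≤ M ∧ ∀ lam : ℂ, lam.re = 0 → ∀ i j : Fin s,
      ‖(1 - lam • collocAC s c)⁻¹ i j‖ ≤ M := by
    have hb : ∀ p : Fin s × Fin s, ∃ M : ℝ, ∀ y : ℝ,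
        ‖(nP s c p.1 p.2).eval ((y : ℂ) * Complex.I) /
          (dP s c).eval ((y : ℂ) * Complex.I)‖ ≤ M :=
      fun p => exists_bound_ratio s (dP s c) (nP s c p.1 p.2) natDegree_dP_le hdc hdz
        (natDegree_nP_le _ _)
    choose Mf hMf using hb
    refine ⟨∑ p : Fin s × Fin s, |Mf p|, Finset.sum_nonneg fun p _ => abs_nonneg _, ?_⟩
    intro lam hre i j
    rw [hentry lam i j, hform lam hre]
    refine le_trans (hMf (i, j) lam.im) ?_
    refine le_trans (le_abs_self _) ?_
    exact Finset.single_le_sum (fun p _ => abs_nonneg (Mf p)) (Finset.mem_univ (i, j))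
  obtain ⟨M, hMnn, hM⟩ := hISIbound
  -- the matrix identity `λ (I-λA)⁻¹ = A⁻¹ ((I-λA)⁻¹ - 1)`
  have hid : ∀ lam : ℂ, IsUnit (1 - lam • collocAC s c).det →
      lam • (1 - lam • collocAC s c)⁻¹ =
        (collocAC s c)⁻¹ * ((1 - lam • collocAC s c)⁻¹ - 1) := by
    intro lam hu
    have h1 : (1 - lam • collocAC s c) * (1 - lam • collocAC s c)⁻¹ = 1 :=
      Matrix.mul_nonsing_inv _ hu
    have h2 : (1 - lam • collocAC s c)⁻¹ - 1 =
        (lam • collocAC s c) * (1 - lam • collocAC s c)⁻¹ := by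
      have haux : (1 - lam • collocAC s c)⁻¹ -
          (1 - lam • collocAC s c) * (1 - lam • collocAC s c)⁻¹ =
          (lam • collocAC s c) * (1 - lam • collocAC s c)⁻¹ := by
        rw [Matrix.sub_mul, Matrix.one_mul, sub_sub_cancel]
      rw [← haux, h1]
    have h3 : (collocAC s c)⁻¹ * collocAC s c = 1 :=
      Matrix.nonsing_inv_mul _ (isUnit_iff_ne_zero.mpr hdetA)
    rw [h2, Matrix.smul_mul, mul_smul_comm, ← Matrix.mul_assoc, h3, Matrix.one_mul]
  -- entrywise bound for `λ (I-λA)⁻¹`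
  set CA : ℝ := ∑ i : Fin s, ∑ k : Fin s, ‖(collocAC s c)⁻¹ i k‖ with hCA
  have hCAnn : 0 ≤ CA :=
    Finset.sum_nonneg fun i _ => Finset.sum_nonneg fun k _ => norm_nonneg _
  have hlamentry : ∀ lam : ℂ, lam.re = 0 → ∀ i j : Fin s,
      ‖lam * (1 - lam • collocAC s c)⁻¹ i j‖ ≤ CA * (M + 1) := by
    intro lam hre i j
    have h4 : lam * (1 - lam • collocAC s c)⁻¹ i j =
        ∑ k : Fin s, (collocAC s c)⁻¹ i k * ((1 - lam • collocAC s c)⁻¹ - 1) k j := by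
      have := congrFun (congrFun (hid lam (hunit lam hre)) i) j
      rw [Matrix.smul_apply, smul_eq_mul] at this
      rw [this, Matrix.mul_apply]
    rw [h4]
    refine le_trans (norm_sum_le _ _) ?_
    have hterm : ∀ k : Fin s, ‖(collocAC s c)⁻¹ i k *
        ((1 - lam • collocAC s c)⁻¹ - 1) k j‖ ≤ ‖(collocAC s c)⁻¹ i k‖ * (M + 1) := by
      intro k
      rw [norm_mul]
      refine mul_le_mul_of_nonneg_left ?_ (norm_nonneg _)
      rw [Matrix.sub_apply]
      refine le_trans (norm_sub_le _ _) ?_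
      have h5 : ‖(1 : Matrix (Fin s) (Fin s) ℂ) k j‖ ≤ 1 := by
        rcases eq_or_ne k j with rfl | hkj
        · simp [Matrix.one_apply]
        · simp [Matrix.one_apply, hkj]
      exact add_le_add (hM lam hre k j) h5
    refine le_trans (Finset.sum_le_sum fun k _ => hterm k) ?_
    rw [← Finset.sum_mul]
    refine mul_le_mul_of_nonneg_right ?_ (by linarith)
    refine Finset.single_le_sum (f := fun i => ∑ k : Fin s, ‖(collocAC s c)⁻¹ i k‖)
      (fun i _ => Finset.sum_nonneg fun k _ => norm_nonneg _) (Finset.mem_univ i)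
  refine ⟨?_, ⟨fun lam h => hunit lam h, ?_⟩, fun lam h => hunit lam h, M, fun lam h i j => hM lam h i j⟩
  · -- I-stability
    intro lam hre _
    rcases eq_or_ne lam 0 with rfl | hlam
    · simp [stabR]
    · have hnegre : ((-lam)⁻¹).re = 0 := hinvre (-lam) (by simp [hre])
      rw [abs_stabR_eq_one hs hc hsym hlam hre (hroot (-lam)⁻¹ hnegre) (hunit lam hre)]
  · -- IS bound
    refine ⟨(∑ i : Fin s, ‖collocBC s c i‖) * (CA * (M + 1)), ?_⟩
    intro lam hre j
    have h6 : lam * (collocBC s c ᵥ* (1 - lam • collocAC s c)⁻¹) j =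
        ∑ i : Fin s, collocBC s c i * (lam * (1 - lam • collocAC s c)⁻¹ i j) := by
      rw [Matrix.vecMul, dotProduct, Finset.mul_sum]
      exact Finset.sum_congr rfl fun i _ => by ring
    rw [h6]
    refine le_trans (norm_sum_le _ _) ?_
    refine le_trans (Finset.sum_le_sum
      (g := fun i => ‖collocBC s c i‖ * (CA * (M + 1))) (fun i _ => ?_)) ?_
    · rw [norm_mul]
      exact mul_le_mul_of_nonneg_left (hlamentry lam hre i j) (norm_nonneg _)
    · rw [← Finset.sum_mul]
end

section
/- Let 0 ≤ c_1 < c_2 < c_3 be three real numbers, and let A be the coefficient matrix of the associated 3-stage Runge–Kutta collocation method. If c_1 > 0, then every eigenvalue of A has strictly positive real part. If c_1 = 0, then every eigenvalue of A is either 0 or has strictly positive real part. -/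
open Polynomial Matrix MeasureTheory

section AuxSpectrum

private lemma integ_aux (p q d u : ℝ) :
    (∫ t in (0:ℝ)..u, (t - p) * (t - q) / d) = (u^3/3 - (p+q)*u^2/2 + p*q*u) / d := by
  rw [intervalIntegral.integral_div]
  congr 1
  have hD : ∀ t : ℝ, HasDerivAt (fun t => t^3/3 - (p+q)*t^2/2 + p*q*t) ((t-p)*(t-q)) t := by
    intro t
    have h := (((hasDerivAt_pow 3 t).div_const 3).sub
      (((hasDerivAt_pow 2 t).const_mul (p+q)).div_const 2)).add ((hasDerivAt_id t).const_mul (p*q))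
    exact h.congr_deriv (by norm_num; ring)
  rw [intervalIntegral.integral_eq_sub_of_hasDerivAt (a := 0) (b := u)
    (f := fun t => t^3/3 - (p+q)*t^2/2 + p*q*t)
    (fun t _ => hD t) (by apply Continuous.intervalIntegrable; continuity)]
  ring

private lemma lag_eq_aux (c : Fin 3 → ℝ) (j a b : Fin 3) (h : (Finset.univ.erase j) = {a, b})
    (hab : a ≠ b) (t : ℝ) :
    lagrangeFun 3 c j t = ((t - c a) * (t - c b)) / ((c j - c a) * (c j - c b)) := by
  rw [lagrangeFun, h, Finset.prod_pair hab, div_mul_div_comm]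

private lemma entry_eq_aux (c : Fin 3 → ℝ) (i j a b : Fin 3)
    (h : (Finset.univ.erase j) = {a, b}) (hab : a ≠ b) :
    collocA 3 c i j = ((c i)^3/3 - (c a + c b)*(c i)^2/2 + c a * c b * c i)
      / ((c j - c a) * (c j - c b)) := by
  show (∫ t in (0:ℝ)..(c i), lagrangeFun 3 c j t) = _
  rw [← integ_aux]; congr 1; ext t; exact lag_eq_aux c j a b h hab t

private lemma trace_eq_aux (c : Fin 3 → ℝ) (h01 : c 0 ≠ c 1) (h02 : c 0 ≠ c 2)
    (h12 : c 1 ≠ c 2) :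
    collocA 3 c 0 0 + collocA 3 c 1 1 + collocA 3 c 2 2 = (c 0 + c 1 + c 2)/3 := by
  have e00 := entry_eq_aux c 0 0 1 2 (by decide) (by decide)
  have e11 := entry_eq_aux c 1 1 0 2 (by decide) (by decide)
  have e22 := entry_eq_aux c 2 2 0 1 (by decide) (by decide)
  have d01 : c 0 - c 1 ≠ 0 := sub_ne_zero.2 h01
  have d02 : c 0 - c 2 ≠ 0 := sub_ne_zero.2 h02
  have d12 : c 1 - c 2 ≠ 0 := sub_ne_zero.2 h12
  have d10 : c 1 - c 0 ≠ 0 := sub_ne_zero.2 (Ne.symm h01)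
  have d20 : c 2 - c 0 ≠ 0 := sub_ne_zero.2 (Ne.symm h02)
  have d21 : c 2 - c 1 ≠ 0 := sub_ne_zero.2 (Ne.symm h12)
  rw [e00, e11, e22]
  clear e00 e11 e22
  field_simp
  ring

set_option maxHeartbeats 1600000 in
private lemma minors_eq_aux (c : Fin 3 → ℝ) (h01 : c 0 ≠ c 1) (h02 : c 0 ≠ c 2)
    (h12 : c 1 ≠ c 2) :
    collocA 3 c 0 0 * collocA 3 c 1 1 - collocA 3 c 0 1 * collocA 3 c 1 0
      + (collocA 3 c 0 0 * collocA 3 c 2 2 - collocA 3 c 0 2 * collocA 3 c 2 0)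
      + (collocA 3 c 1 1 * collocA 3 c 2 2 - collocA 3 c 1 2 * collocA 3 c 2 1)
      = (c 0 * c 1 + c 0 * c 2 + c 1 * c 2)/6 := by
  have e00 := entry_eq_aux c 0 0 1 2 (by decide) (by decide)
  have e10 := entry_eq_aux c 1 0 1 2 (by decide) (by decide)
  have e20 := entry_eq_aux c 2 0 1 2 (by decide) (by decide)
  have e01 := entry_eq_aux c 0 1 0 2 (by decide) (by decide)
  have e11 := entry_eq_aux c 1 1 0 2 (by decide) (by decide)
  have e21 := entry_eq_aux c 2 1 0 2 (by decide) (by decide)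
  have e02 := entry_eq_aux c 0 2 0 1 (by decide) (by decide)
  have e12 := entry_eq_aux c 1 2 0 1 (by decide) (by decide)
  have e22 := entry_eq_aux c 2 2 0 1 (by decide) (by decide)
  have d01 : c 0 - c 1 ≠ 0 := sub_ne_zero.2 h01
  have d02 : c 0 - c 2 ≠ 0 := sub_ne_zero.2 h02
  have d12 : c 1 - c 2 ≠ 0 := sub_ne_zero.2 h12
  have d10 : c 1 - c 0 ≠ 0 := sub_ne_zero.2 (Ne.symm h01)
  have d20 : c 2 - c 0 ≠ 0 := sub_ne_zero.2 (Ne.symm h02)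
  have d21 : c 2 - c 1 ≠ 0 := sub_ne_zero.2 (Ne.symm h12)
  rw [e00, e11, e22, e01, e10, e02, e20, e12, e21]
  clear e00 e10 e20 e01 e11 e21 e02 e12 e22
  field_simp
  ring

private lemma det_eq_aux (c : Fin 3 → ℝ) (h01 : c 0 ≠ c 1) (h02 : c 0 ≠ c 2)
    (h12 : c 1 ≠ c 2) :
    (collocA 3 c).det = c 0 * c 1 * c 2 / 6 := by
  have e00 := entry_eq_aux c 0 0 1 2 (by decide) (by decide)
  have e10 := entry_eq_aux c 1 0 1 2 (by decide) (by decide)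
  have e20 := entry_eq_aux c 2 0 1 2 (by decide) (by decide)
  have e01 := entry_eq_aux c 0 1 0 2 (by decide) (by decide)
  have e11 := entry_eq_aux c 1 1 0 2 (by decide) (by decide)
  have e21 := entry_eq_aux c 2 1 0 2 (by decide) (by decide)
  have e02 := entry_eq_aux c 0 2 0 1 (by decide) (by decide)
  have e12 := entry_eq_aux c 1 2 0 1 (by decide) (by decide)
  have e22 := entry_eq_aux c 2 2 0 1 (by decide) (by decide)
  have d01 : c 0 - c 1 ≠ 0 := sub_ne_zero.2 h01
  have d02 : c 0 - c 2 ≠ 0 := sub_ne_zero.2 h02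
  have d12 : c 1 - c 2 ≠ 0 := sub_ne_zero.2 h12
  have d10 : c 1 - c 0 ≠ 0 := sub_ne_zero.2 (Ne.symm h01)
  have d20 : c 2 - c 0 ≠ 0 := sub_ne_zero.2 (Ne.symm h02)
  have d21 : c 2 - c 1 ≠ 0 := sub_ne_zero.2 (Ne.symm h12)
  rw [Matrix.det_fin_three, e00, e11, e22, e01, e10, e02, e20, e12, e21]
  clear e00 e10 e20 e01 e11 e21 e02 e12 e22
  revert d01 d02 d12 d10 d20 d21
  generalize c 0 = x
  generalize c 1 = y
  generalize c 2 = z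
  intro d01 d02 d12 d10 d20 d21
  set D : ℝ := ((x-y)*(x-z))*(((y-x)*(y-z))*((z-x)*(z-y))) with hD
  have hDne : D ≠ 0 := by
    rw [hD]
    exact mul_ne_zero (mul_ne_zero d01 d02)
      (mul_ne_zero (mul_ne_zero d10 d12) (mul_ne_zero d20 d21))
  have key : ∀ n1 n2 n3 da db dc : ℝ, da * (db * dc) = D →
      n1/da * (n2/db) * (n3/dc) = n1*(n2*n3)/D := by
    intro n1 n2 n3 da db dc h
    rw [div_mul_div_comm, div_mul_div_comm, ← h]
    ring_nf
  rw [key _ _ _ _ _ _ (by ring), key _ _ _ _ _ _ (by ring), key _ _ _ _ _ _ (by ring),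
    key _ _ _ _ _ _ (by ring), key _ _ _ _ _ _ (by ring), key _ _ _ _ _ _ (by ring)]
  rw [div_sub_div_same, div_sub_div_same, ← add_div, ← add_div, div_sub_div_same,
    div_eq_div_iff hDne (by norm_num : (6:ℝ) ≠ 0)]
  ring

private lemma charpoly_eval_aux (M : Matrix (Fin 3) (Fin 3) ℝ) (z : ℂ) :
    Polynomial.aeval z M.charpoly =
      z^3 - ((M 0 0 + M 1 1 + M 2 2 : ℝ) : ℂ) * z^2
      + ((M 0 0 * M 1 1 - M 0 1 * M 1 0 + (M 0 0 * M 2 2 - M 0 2 * M 2 0)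
          + (M 1 1 * M 2 2 - M 1 2 * M 2 1) : ℝ) : ℂ) * z
      - ((M.det : ℝ) : ℂ) := by
  rw [Matrix.charpoly, AlgHom.map_det (Polynomial.aeval z), Matrix.det_fin_three,
    Matrix.det_fin_three]
  simp [Matrix.charmatrix_apply, Matrix.map_apply]
  ring

private lemma cubic_roots_pos_aux (T E D : ℝ) (hT : 0 < T) (hE : 0 < E) (hD : 0 < D)
    (hTED : D < T * E) (z : ℂ)
    (hz : z^3 - (T:ℂ) * z^2 + (E:ℂ) * z - (D:ℂ) = 0) : 0 < z.re := by
  obtain ⟨x, y⟩ := z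
  show 0 < x
  by_contra hx
  push_neg at hx
  have hre := congrArg Complex.re hz
  have him := congrArg Complex.im hz
  simp only [Complex.add_re, Complex.sub_re, Complex.mul_re, Complex.mul_im,
    Complex.add_im, Complex.sub_im, Complex.ofReal_re, Complex.ofReal_im,
    Complex.zero_re, Complex.zero_im, pow_succ, pow_zero, Complex.one_re,
    Complex.one_im] at hre him
  ring_nf at hre him
  rcases eq_or_ne y 0 with hy | hy
  · rw [hy] at hre
    nlinarith [mul_nonneg hT.le (sq_nonneg x), mul_nonpos_of_nonneg_of_nonpos hE.le hx,
      mul_nonneg (mul_nonneg (neg_nonneg.2 hx) (neg_nonneg.2 hx)) (neg_nonneg.2 hx)]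
  · have hfac : y * (3*x^2 - y^2 - 2*T*x + E) = 0 := by linarith [him]
    have hq : 3*x^2 - y^2 - 2*T*x + E = 0 := by
      rcases mul_eq_zero.1 hfac with h | h
      · exact absurd h hy
      · exact h
    nlinarith [mul_nonneg hT.le (sq_nonneg x), mul_nonpos_of_nonneg_of_nonpos hE.le hx,
      mul_nonpos_of_nonneg_of_nonpos (sq_nonneg T) hx,
      mul_nonneg (mul_nonneg (neg_nonneg.2 hx) (neg_nonneg.2 hx)) (neg_nonneg.2 hx), hre]

private lemma quad_roots_pos_aux (T E : ℝ) (hT : 0 < T) (hE : 0 < E) (z : ℂ)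
    (hz : z^2 - (T:ℂ) * z + (E:ℂ) = 0) : 0 < z.re := by
  obtain ⟨x, y⟩ := z
  show 0 < x
  by_contra hx
  push_neg at hx
  have hre := congrArg Complex.re hz
  have him := congrArg Complex.im hz
  simp only [Complex.add_re, Complex.sub_re, Complex.mul_re, Complex.mul_im,
    Complex.add_im, Complex.sub_im, Complex.ofReal_re, Complex.ofReal_im,
    Complex.zero_re, Complex.zero_im, pow_succ, pow_zero, Complex.one_re,
    Complex.one_im] at hre him
  ring_nf at hre him
  rcases eq_or_ne y 0 with hy | hy
  · rw [hy] at hre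
    nlinarith [mul_nonpos_of_nonneg_of_nonpos hT.le hx]
  · have hfac : y * (2*x - T) = 0 := by linarith [him]
    have hq : 2*x - T = 0 := by
      rcases mul_eq_zero.1 hfac with h | h
      · exact absurd h hy
      · exact h
    linarith

end AuxSpectrum

/-- eigenvalue localization for forward 3-stage collocation methods. -/
theorem spectrum_three_stages (c : Fin 3 → ℝ) (h0 : 0 ≤ c 0) (hc : StrictMono c) :
    (0 < c 0 → ∀ z : ℂ, Polynomial.aeval z (collocA 3 c).charpoly = 0 → 0 < z.re) ∧
    (c 0 = 0 → ∀ z : ℂ, Polynomial.aeval z (collocA 3 c).charpoly = 0 → z = 0 ∨ 0 < z.re) := by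
  have h01lt : c 0 < c 1 := hc (by decide : (0:Fin 3) < 1)
  have h12lt : c 1 < c 2 := hc (by decide : (1:Fin 3) < 2)
  have h01 : c 0 ≠ c 1 := ne_of_lt h01lt
  have h02 : c 0 ≠ c 2 := ne_of_lt (h01lt.trans h12lt)
  have h12 : c 1 ≠ c 2 := ne_of_lt h12lt
  have htr := trace_eq_aux c h01 h02 h12
  have hmn := minors_eq_aux c h01 h02 h12
  have hdt := det_eq_aux c h01 h02 h12
  have key : ∀ z : ℂ, Polynomial.aeval z (collocA 3 c).charpoly =
      z^3 - (((c 0 + c 1 + c 2)/3 : ℝ) : ℂ) * z^2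
      + (((c 0 * c 1 + c 0 * c 2 + c 1 * c 2)/6 : ℝ) : ℂ) * z
      - ((c 0 * c 1 * c 2 / 6 : ℝ) : ℂ) := by
    intro z
    rw [charpoly_eval_aux, htr, hmn, hdt]
  constructor
  · intro hc0 z hz
    rw [key z] at hz
    have hc1 : 0 < c 1 := lt_trans hc0 h01lt
    have hc2 : 0 < c 2 := lt_trans hc1 h12lt
    refine cubic_roots_pos_aux ((c 0 + c 1 + c 2)/3) ((c 0 * c 1 + c 0 * c 2 + c 1 * c 2)/6)
      (c 0 * c 1 * c 2 / 6) (by nlinarith) (by nlinarith)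
      (by nlinarith [mul_pos (mul_pos hc0 hc1) hc2])
      (by nlinarith [mul_pos (mul_pos hc0 hc0) hc1, mul_pos (mul_pos hc0 hc0) hc2,
        mul_pos (mul_pos hc1 hc1) hc0, mul_pos (mul_pos hc1 hc1) hc2,
        mul_pos (mul_pos hc2 hc2) hc0, mul_pos (mul_pos hc2 hc2) hc1,
        mul_pos (mul_pos hc0 hc1) hc2]) z hz
  · intro hc0 z hz
    rw [key z, hc0] at hz
    have hc1 : 0 < c 1 := hc0 ▸ h01lt
    have hc2 : 0 < c 2 := lt_trans hc1 h12lt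
    have hfac : z * (z^2 - (((c 1 + c 2)/3 : ℝ) : ℂ) * z + (((c 1 * c 2)/6 : ℝ) : ℂ)) = 0 := by
      rw [← hz]
      push_cast
      ring
    rcases mul_eq_zero.1 hfac with h | h
    · exact Or.inl h
    · exact Or.inr (quad_roots_pos_aux ((c 1 + c 2)/3) ((c 1 * c 2)/6)
        (by nlinarith) (by nlinarith) z h)
end

section
/- Let 0 < c_1 < c_2 < c_3 < c_4 be four positive real numbers, and let Σ_1 = c_1+c_2+c_3+c_4, Σ_2 = Σ_{1≤i<j≤4} c_i c_j, Σ_3 = Σ_{1≤i<j<k≤4} c_i c_j c_k, Σ_4 = c_1 c_2 c_3 c_4 be the elementary symmetric polynomials in c_1, c_2, c_3, c_4. Then Σ_1 Σ_2 Σ_3 − 2 Σ_3² − 3 Σ_1² Σ_4 > 0. -/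
open Polynomial Matrix MeasureTheory

/-- for `0 < c₁ < c₂ < c₃ < c₄` the elementary symmetric polynomials satisfy
`Σ₁ Σ₂ Σ₃ - 2 Σ₃² - 3 Σ₁² Σ₄ > 0`. -/
theorem elementary_symmetric_inequality (c₁ c₂ c₃ c₄ : ℝ)
    (h1 : 0 < c₁) (h12 : c₁ < c₂) (h23 : c₂ < c₃) (h34 : c₃ < c₄) :
    0 < (c₁ + c₂ + c₃ + c₄) *
          (c₁*c₂ + c₁*c₃ + c₁*c₄ + c₂*c₃ + c₂*c₄ + c₃*c₄) *
          (c₁*c₂*c₃ + c₁*c₂*c₄ + c₁*c₃*c₄ + c₂*c₃*c₄) -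
        2 * (c₁*c₂*c₃ + c₁*c₂*c₄ + c₁*c₃*c₄ + c₂*c₃*c₄) ^ 2 -
        3 * (c₁ + c₂ + c₃ + c₄) ^ 2 * (c₁*c₂*c₃*c₄) := by
  have h1' : 0 < c₁ := h1
  have h2' : 0 < c₂ := h1.trans h12
  have h3' : 0 < c₃ := h2'.trans h23
  have h4' : 0 < c₄ := h3'.trans h34
  have key : (c₁ + c₂ + c₃ + c₄) *
          (c₁*c₂ + c₁*c₃ + c₁*c₄ + c₂*c₃ + c₂*c₄ + c₃*c₄) *
          (c₁*c₂*c₃ + c₁*c₂*c₄ + c₁*c₃*c₄ + c₂*c₃*c₄) -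
        2 * (c₁*c₂*c₃ + c₁*c₂*c₄ + c₁*c₃*c₄ + c₂*c₃*c₄) ^ 2 -
        3 * (c₁ + c₂ + c₃ + c₄) ^ 2 * (c₁*c₂*c₃*c₄) = (c₁*c₂*(c₃-c₄))^2 + (c₁*c₃*(c₂-c₄))^2 + (c₁*c₄*(c₂-c₃))^2 + (c₂*c₃*(c₁-c₄))^2 + (c₂*c₄*(c₁-c₃))^2 + (c₃*c₄*(c₁-c₂))^2 + c₂*c₃*(c₁*(c₂-c₃))^2 + c₁*c₃*(c₂*(c₁-c₃))^2 + c₁*c₂*(c₃*(c₁-c₂))^2 + 4*(c₁*c₂*c₃)^2 + c₂*c₄*(c₁*(c₂-c₄))^2 + c₁*c₄*(c₂*(c₁-c₄))^2 + c₁*c₂*(c₄*(c₁-c₂))^2 + 4*(c₁*c₂*c₄)^2 + c₃*c₄*(c₁*(c₃-c₄))^2 + c₁*c₄*(c₃*(c₁-c₄))^2 + c₁*c₃*(c₄*(c₁-c₃))^2 + 4*(c₁*c₃*c₄)^2 + c₃*c₄*(c₂*(c₃-c₄))^2 + c₂*c₄*(c₃*(c₂-c₄))^2 + c₂*c₃*(c₄*(c₂-c₃))^2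 + 4*(c₂*c₃*c₄)^2 := by ring
  rw [key]
  have t0 : (0:ℝ) ≤ (c₁*c₂*(c₃-c₄))^2 := sq_nonneg _
  have t1 : (0:ℝ) ≤ (c₁*c₃*(c₂-c₄))^2 := sq_nonneg _
  have t2 : (0:ℝ) ≤ (c₁*c₄*(c₂-c₃))^2 := sq_nonneg _
  have t3 : (0:ℝ) ≤ (c₂*c₃*(c₁-c₄))^2 := sq_nonneg _
  have t4 : (0:ℝ) ≤ (c₂*c₄*(c₁-c₃))^2 := sq_nonneg _
  have t5 : (0:ℝ) ≤ (c₃*c₄*(c₁-c₂))^2 := sq_nonneg _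
  have t6 : (0:ℝ) ≤ c₂*c₃*(c₁*(c₂-c₃))^2 := mul_nonneg (mul_pos h2' h3').le (sq_nonneg _)
  have t7 : (0:ℝ) ≤ c₁*c₃*(c₂*(c₁-c₃))^2 := mul_nonneg (mul_pos h1' h3').le (sq_nonneg _)
  have t8 : (0:ℝ) ≤ c₁*c₂*(c₃*(c₁-c₂))^2 := mul_nonneg (mul_pos h1' h2').le (sq_nonneg _)
  have t9 : (0:ℝ) < 4*(c₁*c₂*c₃)^2 := by positivity
  have t10 : (0:ℝ) ≤ c₂*c₄*(c₁*(c₂-c₄))^2 := mul_nonneg (mul_pos h2' h4').le (sq_nonneg _)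
  have t11 : (0:ℝ) ≤ c₁*c₄*(c₂*(c₁-c₄))^2 := mul_nonneg (mul_pos h1' h4').le (sq_nonneg _)
  have t12 : (0:ℝ) ≤ c₁*c₂*(c₄*(c₁-c₂))^2 := mul_nonneg (mul_pos h1' h2').le (sq_nonneg _)
  have t13 : (0:ℝ) < 4*(c₁*c₂*c₄)^2 := by positivity
  have t14 : (0:ℝ) ≤ c₃*c₄*(c₁*(c₃-c₄))^2 := mul_nonneg (mul_pos h3' h4').le (sq_nonneg _)
  have t15 : (0:ℝ) ≤ c₁*c₄*(c₃*(c₁-c₄))^2 := mul_nonneg (mul_pos h1' h4').le (sq_nonneg _)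
  have t16 : (0:ℝ) ≤ c₁*c₃*(c₄*(c₁-c₃))^2 := mul_nonneg (mul_pos h1' h3').le (sq_nonneg _)
  have t17 : (0:ℝ) < 4*(c₁*c₃*c₄)^2 := by positivity
  have t18 : (0:ℝ) ≤ c₃*c₄*(c₂*(c₃-c₄))^2 := mul_nonneg (mul_pos h3' h4').le (sq_nonneg _)
  have t19 : (0:ℝ) ≤ c₂*c₄*(c₃*(c₂-c₄))^2 := mul_nonneg (mul_pos h2' h4').le (sq_nonneg _)
  have t20 : (0:ℝ) ≤ c₂*c₃*(c₄*(c₂-c₃))^2 := mul_nonneg (mul_pos h2' h3').le (sq_nonneg _)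
  have t21 : (0:ℝ) < 4*(c₂*c₃*c₄)^2 := by positivity
  linarith
end
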